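/- For every m ∈ (−1,1) and every q ∈ ℝ, the Curie-Weiss Lagrangian L(m,q) = −(1/2)·√(4(1−m²)+q²) + (q/2)·log((√(4(1−m²)+q²)+q)/(2(1−m))) + 1 satisfies L(m,q) ≥ 0, with equality if and only if q = −2m. -/

import Mathlib

/-- The Curie-Weiss Lagrangian for infinite-temperature spin-flip dynamics. -/
noncomputable def LCW (m q : ℝ) : ℝ :=
  -(1 / 2) * Real.sqrt (4 * (1 - m ^ 2) + q ^ 2) +
    (q / 2) * Real.log ((Real.sqrt (4 * (1 - m ^ 2) + q ^ 2) + q) / (2 * (1 - m))) + 1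

set_option maxHeartbeats 1000000 in
theorem stmt5 (m : ℝ) (hm : m ∈ Set.Ioo (-1 : ℝ) 1) (q : ℝ) :
    0 ≤ LCW m q ∧ (LCW m q = 0 ↔ q = -2 * m) := by
  obtain ⟨hm1, hm2⟩ := hm
  have h1m : (0:ℝ) < 1 - m := by linarith
  have h1m2 : (0:ℝ) < 1 - m ^ 2 := by nlinarith
  set s := Real.sqrt (4 * (1 - m ^ 2) + q ^ 2) with hs_def
  have h4 : (0:ℝ) < 4 * (1 - m ^ 2) + q ^ 2 := by nlinarith [sq_nonneg q]
  have hs2 : s ^ 2 = 4 * (1 - m ^ 2) + q ^ 2 := Real.sq_sqrt h4.le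
  have hs0 : 0 < s := Real.sqrt_pos.mpr h4
  have hspq : 0 < s + q := by nlinarith [hs2, hs0, sq_nonneg (s + q)]
  set x := (s + q) / (2 * (1 - m)) with hx_def
  have hx0 : 0 < x := by
    rw [hx_def]; positivity
  have hL : LCW m q = -(1/2) * s + (q/2) * Real.log x + 1 := by
    simp only [LCW]
    rfl
  -- key inequality
  have hK : 2 * (1 - m ^ 2) - m * q ≤ s := by
    nlinarith [hs2, hs0, mul_nonneg h1m2.le (sq_nonneg (q + 2 * m))]
  -- backward direction
  have hback : LCW m (-2 * m) = 0 := by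
    have h2 : Real.sqrt (4 * (1 - m ^ 2) + (-2 * m) ^ 2) = 2 := by
      rw [show 4 * (1 - m ^ 2) + (-2 * m) ^ 2 = (2:ℝ) ^ 2 by ring]
      exact Real.sqrt_sq (by norm_num)
    simp only [LCW]
    rw [h2, show (2 + -2 * m) / (2 * (1 - m)) = 1 by
      rw [show (2:ℝ) + -2 * m = 2 * (1 - m) by ring]; exact div_self (by positivity)]
    rw [Real.log_one]
    ring
  have main : 0 ≤ LCW m q ∧ (LCW m q = 0 → q = -2 * m) := by
    rcases le_or_gt 0 q with hq | hq
    · -- q ≥ 0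
      have h5 : x⁻¹ * (s + q) = 2 * (1 - m) := by
        rw [hx_def, inv_div, div_mul_cancel₀ _ hspq.ne']
      have hlog : 1 - x⁻¹ ≤ Real.log x := by
        have h := Real.log_le_sub_one_of_pos (inv_pos.mpr hx0)
        rw [Real.log_inv] at h; linarith
      have hprod : (-(1/2) * s + (q/2) * (1 - x⁻¹) + 1) * (2 * (s + q))
          = 2 * (s - (2 * (1 - m ^ 2) - m * q)) := by
        linear_combination (-q) * h5 - hs2
      have hB : 0 ≤ -(1/2) * s + (q/2) * (1 - x⁻¹) + 1 := by
        have h2s : (0:ℝ) < 2 * (s + q) := by linarith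
        have hBval : -(1/2) * s + (q/2) * (1 - x⁻¹) + 1
            = 2 * (s - (2 * (1 - m ^ 2) - m * q)) / (2 * (s + q)) := by
          rw [eq_div_iff h2s.ne']; exact hprod
        rw [hBval]
        exact div_nonneg (by linarith) h2s.le
      have hLB : -(1/2) * s + (q/2) * (1 - x⁻¹) + 1 ≤ LCW m q := by
        rw [hL]
        have := mul_le_mul_of_nonneg_left hlog (show (0:ℝ) ≤ q/2 by linarith)
        linarith
      refine ⟨le_trans hB hLB, fun h0 => ?_⟩
      have hBeq : -(1/2) * s + (q/2) * (1 - x⁻¹) + 1 = 0 := by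
        have : -(1/2) * s + (q/2) * (1 - x⁻¹) + 1 ≤ 0 := by rw [← h0]; exact hLB
        linarith
      have hz : (2:ℝ) * (s - (2 * (1 - m ^ 2) - m * q)) = 0 := by
        rw [← hprod, hBeq, zero_mul]
      have hsY : s = 2 * (1 - m ^ 2) - m * q := by linarith
      have hs2' : (2 * (1 - m ^ 2) - m * q) ^ 2 = 4 * (1 - m ^ 2) + q ^ 2 := by
        rw [← hsY]; exact hs2
      have h2 : (1 - m ^ 2) * (q + 2 * m) ^ 2 = 0 := by linear_combination (-1 : ℝ) * hs2'
      have h3 : (q + 2 * m) ^ 2 = 0 := by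
        rcases mul_eq_zero.mp h2 with h | h
        · exact absurd h h1m2.ne'
        · exact h
      have := sq_eq_zero_iff.mp h3
      linarith
    · -- q < 0
      have h6 : x * (2 * (1 - m)) = s + q := by
        rw [hx_def, div_mul_cancel₀ _ (by positivity : (2:ℝ) * (1 - m) ≠ 0)]
      have hlog : Real.log x ≤ x - 1 := Real.log_le_sub_one_of_pos hx0
      have hprod : (-(1/2) * s + (q/2) * (x - 1) + 1) * (8 * (1 - m))
          = (s + q - 2 * (1 - m)) ^ 2 := by
        linear_combination 2 * q * h6 - hs2
      have h8 : (0:ℝ) < 8 * (1 - m) := by linarith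
      have hB : 0 ≤ -(1/2) * s + (q/2) * (x - 1) + 1 := by
        have hBval : -(1/2) * s + (q/2) * (x - 1) + 1
            = (s + q - 2 * (1 - m)) ^ 2 / (8 * (1 - m)) := by
          rw [eq_div_iff h8.ne']; exact hprod
        rw [hBval]; positivity
      have hLB : -(1/2) * s + (q/2) * (x - 1) + 1 ≤ LCW m q := by
        rw [hL]
        have := mul_le_mul_of_nonpos_left hlog (show q/2 ≤ 0 by linarith)
        linarith
      refine ⟨le_trans hB hLB, fun h0 => ?_⟩
      have hBeq : -(1/2) * s + (q/2) * (x - 1) + 1 = 0 := by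
        have : -(1/2) * s + (q/2) * (x - 1) + 1 ≤ 0 := by rw [← h0]; exact hLB
        linarith
      have hz : (s + q - 2 * (1 - m)) ^ 2 = 0 := by
        rw [← hprod, hBeq, zero_mul]
      have heq : s = 2 * (1 - m) - q := by
        have := sq_eq_zero_iff.mp hz
        linarith
      have hs2' : (2 * (1 - m) - q) ^ 2 = 4 * (1 - m ^ 2) + q ^ 2 := by
        rw [← heq]; exact hs2
      have h2 : (1 - m) * (q + 2 * m) = 0 := by linear_combination (-1/4 : ℝ) * hs2'
      rcases mul_eq_zero.mp h2 with h | h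
      · exact absurd h h1m.ne'
      · linarith
  exact ⟨main.1, ⟨main.2, fun h => by rw [h]; exact hback⟩⟩
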